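/- Let (A, m) be a separated local ring with residue field K, and let f(t) ∈ A[[t]] be a power series whose image f₀(t) ∈ K[[t]] modulo m is nonzero. Then f(t) is a regular element (non zero-divisor) in A[[t]]. -/

import Mathlib

open IsLocalRing

/-- If `(A, m)` is a separated local ring (`⋂ₙ mⁿ = 0`) with residue field `K` and
`f ∈ A[[t]]` is a power series whose image in `K[[t]]` (reducing each coefficient
modulo `m`) is nonzero, then `f` is a non zero-divisor in `A[[t]]`. -/
theorem powerSeries_regular_of_residue_ne_zero {A : Type*} [CommRing A] [IsLocalRing A]
    (hsep : (⨅ n : ℕ, (maximalIdeal A) ^ n) = ⊥)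
    (f : PowerSeries A)
    (hf : PowerSeries.map (residue A) f ≠ 0) :
    f ∈ nonZeroDivisors (PowerSeries A) := by
  classical
  rw [mem_nonZeroDivisors_iff_right]
  intro g hg
  -- there is a coefficient of f not in the maximal ideal
  have hex : ∃ n, PowerSeries.coeff n f ∉ maximalIdeal A := by
    by_contra h
    push_neg at h
    apply hf
    ext n
    simp only [PowerSeries.coeff_map, map_zero]
    exact (residue_eq_zero_iff _).mpr (h n)
  set d := Nat.find hex with hd_def
  have hd : PowerSeries.coeff d f ∉ maximalIdeal A := Nat.find_spec hex
  have hlt : ∀ i < d, PowerSeries.coeff i f ∈ maximalIdeal A := by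
    intro i hi
    by_contra h
    exact absurd (Nat.find_le h) (not_le.mpr hi)
  have hu : IsUnit (PowerSeries.coeff d f) := by
    by_contra h
    exact hd ((mem_maximalIdeal _).mpr h)
  obtain ⟨u, hu_eq⟩ := hu
  have key : ∀ k n, PowerSeries.coeff n g ∈ (maximalIdeal A) ^ k := by
    intro k
    induction k with
    | zero => simp
    | succ k ih =>
      intro n
      induction n using Nat.strong_induction_on with
      | _ n ihn =>
        have h0 : PowerSeries.coeff (n + d) (g * f) = 0 := by rw [hg]; simp
        rw [PowerSeries.coeff_mul] at h0
        have hmem : (n, d) ∈ Finset.HasAntidiagonal.antidiagonal (n + d) := by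
          simp
        have hrest : ∀ p ∈ (Finset.HasAntidiagonal.antidiagonal (n + d)).erase (n, d),
            PowerSeries.coeff p.1 g * PowerSeries.coeff p.2 f ∈ (maximalIdeal A) ^ (k + 1) := by
          rintro ⟨a, b⟩ hp
          rw [Finset.mem_erase, Finset.HasAntidiagonal.mem_antidiagonal] at hp
          obtain ⟨hne, hab⟩ := hp
          rcases lt_trichotomy a n with h1 | h1 | h1
          · exact Ideal.mul_mem_right _ _ (ihn a h1)
          · exact absurd (by simp only [Prod.mk.injEq]; omega) hne
          · have hb : b < d := by omega
            rw [pow_succ]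
            exact Ideal.mul_mem_mul (ih a) (hlt b hb)
        have hterm : PowerSeries.coeff n g * PowerSeries.coeff d f ∈ (maximalIdeal A) ^ (k + 1) := by
          have hsum := Finset.sum_erase_add (Finset.HasAntidiagonal.antidiagonal (n + d))
            (fun p => PowerSeries.coeff p.1 g * PowerSeries.coeff p.2 f) hmem
          rw [h0] at hsum
          have : PowerSeries.coeff n g * PowerSeries.coeff d f
              = - ∑ p ∈ (Finset.HasAntidiagonal.antidiagonal (n + d)).erase (n, d),
                  PowerSeries.coeff p.1 g * PowerSeries.coeff p.2 f := by
            linear_combination hsum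
          rw [this]
          exact neg_mem (Ideal.sum_mem _ hrest)
        have : PowerSeries.coeff n g
            = (PowerSeries.coeff n g * PowerSeries.coeff d f) * ↑u⁻¹ := by
          rw [mul_assoc, ← hu_eq]
          simp
        rw [this]
        exact Ideal.mul_mem_right _ _ hterm
  ext n
  have : PowerSeries.coeff n g ∈ (⨅ k : ℕ, (maximalIdeal A) ^ k) :=
    Ideal.mem_iInf.mpr fun k => key k n
  rw [hsep] at this
  simpa using this
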